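/- Let r₁,…,r_n ∈ ℝ³, ρ₁,…,ρ_n > 0, A = Σᵢ ρᵢ rᵢrᵢᵀ, and R, P ∈ SO(3) with bᵢ = Rᵀ rᵢ. Then ψ(A R Pᵀ) = (1/2) P Σᵢ ρᵢ (bᵢ × Pᵀ rᵢ), where ψ(M) = vex((M − Mᵀ)/2). -/

import Mathlib

open Matrix Real

noncomputable section

/-- The skew-symmetric cross-product matrix `[u]ₓ`. -/
def skew (u : Fin 3 → ℝ) : Matrix (Fin 3) (Fin 3) ℝ :=
  !![0, -u 2, u 1; u 2, 0, -u 0; -u 1, u 0, 0]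

/-- Inverse of `skew` on skew-symmetric matrices. -/
def vex (M : Matrix (Fin 3) (Fin 3) ℝ) : Fin 3 → ℝ :=
  ![M 2 1, M 0 2, M 1 0]

/-- `ψ(A) = vex((A - Aᵀ)/2)`. -/
def psiMap (M : Matrix (Fin 3) (Fin 3) ℝ) : Fin 3 → ℝ :=
  vex ((1 / 2 : ℝ) • (M - Mᵀ))

/-- Cross product on `ℝ³`. -/
def cross3 (x y : Fin 3 → ℝ) : Fin 3 → ℝ :=
  ![x 1 * y 2 - x 2 * y 1, x 2 * y 0 - x 0 * y 2, x 0 * y 1 - x 1 * y 0]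

/-- Rodrigues rotation. -/
def Ra (θ : ℝ) (u : Fin 3 → ℝ) : Matrix (Fin 3) (Fin 3) ℝ :=
  1 + Real.sin θ • skew u + (1 - Real.cos θ) • (skew u * skew u)

/-- Membership in SO(3). -/
def SO3 (R : Matrix (Fin 3) (Fin 3) ℝ) : Prop :=
  R * Rᵀ = 1 ∧ R.det = 1

/-- `ψ(ARPᵀ) = (1/2) P Σ ρᵢ (bᵢ × Pᵀrᵢ)` with `bᵢ = Rᵀrᵢ`. -/
-- aux lemmas

lemma adjugate_eq_transpose {P : Matrix (Fin 3) (Fin 3) ℝ} (hP : SO3 P) :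
    P.adjugate = Pᵀ := by
  have h1 : Pᵀ * P = 1 := mul_eq_one_comm.mp hP.1
  calc P.adjugate = (Pᵀ * P) * P.adjugate := by rw [h1, one_mul]
    _ = Pᵀ * (P * P.adjugate) := by rw [Matrix.mul_assoc]
    _ = Pᵀ := by rw [Matrix.mul_adjugate, hP.2, one_smul, mul_one]

lemma cross3_adj (M : Matrix (Fin 3) (Fin 3) ℝ) (u v : Fin 3 → ℝ) :
    cross3 (M *ᵥ u) (M *ᵥ v) = (Mᵀ).adjugate *ᵥ cross3 u v := by
  funext k
  fin_cases k <;>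
    simp [cross3, Matrix.adjugate_fin_three, Matrix.mulVec, dotProduct,
      Fin.sum_univ_three] <;> ring

lemma cross3_rot {P : Matrix (Fin 3) (Fin 3) ℝ} (hP : SO3 P) (u v : Fin 3 → ℝ) :
    cross3 (P *ᵥ u) (P *ᵥ v) = P *ᵥ cross3 u v := by
  have hPT : SO3 Pᵀ := by
    constructor
    · rw [Matrix.transpose_transpose]; exact mul_eq_one_comm.mp hP.1
    · rw [Matrix.det_transpose]; exact hP.2
  rw [cross3_adj, adjugate_eq_transpose hPT, Matrix.transpose_transpose]

lemma psiMap_outer (x y : Fin 3 → ℝ) :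
    psiMap (vecMulVec x y) = (1 / 2 : ℝ) • cross3 y x := by
  funext k
  fin_cases k <;>
    simp [psiMap, vex, cross3, Matrix.vecMulVec, Matrix.transpose_apply] <;> ring


theorem stmt_13 (n : ℕ) (r : Fin n → (Fin 3 → ℝ)) (ρ : Fin n → ℝ)
    (hρ : ∀ i, 0 < ρ i)
    (A : Matrix (Fin 3) (Fin 3) ℝ) (hAdef : A = ∑ i, ρ i • vecMulVec (r i) (r i))
    (R P : Matrix (Fin 3) (Fin 3) ℝ) (hR : SO3 R) (hP : SO3 P)
    (b : Fin n → (Fin 3 → ℝ)) (hb : ∀ i, b i = Rᵀ *ᵥ r i) :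
    psiMap (A * R * Pᵀ) =
      (1 / 2 : ℝ) • (P *ᵥ ∑ i, ρ i • cross3 (b i) (Pᵀ *ᵥ r i)) := by
  have hPPT : ∀ v : Fin 3 → ℝ, P *ᵥ (Pᵀ *ᵥ v) = v := by
    intro v
    rw [Matrix.mulVec_mulVec, hP.1, Matrix.one_mulVec]
  have hM : A * R * Pᵀ = ∑ i, ρ i • vecMulVec (r i) (P *ᵥ b i) := by
    rw [hAdef, Finset.sum_mul, Finset.sum_mul]
    refine Finset.sum_congr rfl fun i _ => ?_
    rw [Matrix.smul_mul, Matrix.smul_mul]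
    congr 1
    ext j k
    simp [Matrix.mul_apply, Matrix.vecMulVec, Matrix.mulVec, dotProduct,
      hb, Fin.sum_univ_three, Matrix.transpose_apply]
    ring
  have hpsi : psiMap (A * R * Pᵀ) = ∑ i, ρ i • psiMap (vecMulVec (r i) (P *ᵥ b i)) := by
    rw [hM]
    funext k
    fin_cases k <;>
      simp [psiMap, vex, Matrix.sum_apply, Matrix.smul_apply, Matrix.transpose_apply,
        Finset.sum_apply, Finset.sum_sub_distrib, Finset.mul_sum, mul_sub] <;>
      congr 1 <;> exact Finset.sum_congr rfl fun i _ => by simp only [Matrix.vecMulVec_apply, mul_comm, mul_assoc, mul_left_comm]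
  rw [hpsi]
  have hsum : P *ᵥ ∑ i, ρ i • cross3 (b i) (Pᵀ *ᵥ r i)
      = ∑ i, ρ i • cross3 (P *ᵥ b i) (r i) := by
    rw [← Matrix.mulVecLin_apply, map_sum]
    refine Finset.sum_congr rfl fun i _ => ?_
    rw [_root_.map_smul, Matrix.mulVecLin_apply, ← cross3_rot hP, hPPT]
  rw [hsum, Finset.smul_sum]
  refine Finset.sum_congr rfl fun i _ => ?_
  rw [psiMap_outer]
  rw [smul_comm]
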